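/- Let M be a finite matroid with rank function r. A set I ⊆ E(M) is independent in M if and only if |I ∩ X| ≤ r(X) for every cyclic flat X of M. -/

import Mathlib

namespace Matroid

variable {α β : Type*}

/-- A circuit of a matroid: a minimal dependent set. -/
def IsCircuit' (M : Matroid α) (C : Set α) : Prop :=
  M.Dep C ∧ ∀ D, D ⊂ C → M.Indep D

/-- A cyclic flat: a flat that is a (possibly empty) union of circuits. -/
def CyclicFlat (M : Matroid α) (X : Set α) : Prop :=
  M.IsFlat X ∧ ∀ e ∈ X, ∃ C, M.IsCircuit' C ∧ C ⊆ X ∧ e ∈ C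

/-- The rank of a set: the maximum size of an independent subset. -/
noncomputable def rk (M : Matroid α) (X : Set α) : ℕ :=
  sSup {n | ∃ I, M.Indep I ∧ I ⊆ X ∧ I.ncard = n}

/-- Deletion of a set from a matroid. -/
def del (M : Matroid α) (D : Set α) : Matroid α := M ↾ (M.E \ D)

/-- Contraction of a set in a matroid. -/
def con (M : Matroid α) (C : Set α) : Matroid α := (M✶ ↾ (M.E \ C))✶

/-- `N` is a minor of `M` if it is obtained from `M` by a contraction and a deletion. -/
def IsMinorOf (N M : Matroid α) : Prop := ∃ C D, N = (M.con C).del D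

/-- Matroid isomorphism: a bijection of ground sets preserving independence. -/
def IsIsoTo (M : Matroid α) (N : Matroid β) : Prop :=
  ∃ e : M.E ≃ N.E, ∀ I : Set M.E,
    M.Indep (Subtype.val '' I) ↔ N.Indep (Subtype.val '' (e '' I))

/-- Every finite dependent set contains a circuit. -/
lemma Dep.exists_isCircuit'_subset {M : Matroid α} {D : Set α} (hD : M.Dep D)
    (hfin : D.Finite) : ∃ C ⊆ D, M.IsCircuit' C := by
  classical
  -- take a dependent subset of minimal cardinality
  set S : Set ℕ := {n | ∃ C ⊆ D, M.Dep C ∧ C.ncard = n} with hS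
  have hne : S.Nonempty := ⟨D.ncard, D, Set.Subset.rfl, hD, rfl⟩
  obtain ⟨C, hCD, hCdep, hCcard⟩ := Nat.sInf_mem hne
  refine ⟨C, hCD, show M.Dep C ∧ ∀ D', D' ⊂ C → M.Indep D' from ⟨hCdep, fun D' hD' ↦ ?_⟩⟩

  have hD'E : D' ⊆ M.E := hD'.subset.trans hCdep.subset_ground
  by_contra hcon
  have hD'dep : M.Dep D' := ⟨hcon, hD'E⟩
  have hlt : D'.ncard < C.ncard :=
    Set.ncard_lt_ncard hD' (hfin.subset hCD)
  rw [hCcard] at hlt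
  exact (Nat.notMem_of_lt_sInf hlt) ⟨D', hD'.subset.trans hCD, hD'dep, rfl⟩

lemma indep_ncard_le_rk {M : Matroid α} [M.Finite] {J X : Set α}
    (hJ : M.Indep J) (hJX : J ⊆ X) : J.ncard ≤ M.rk X := by
  have hmem : J.ncard ∈ {n | ∃ I, M.Indep I ∧ I ⊆ X ∧ I.ncard = n} := ⟨J, hJ, hJX, rfl⟩
  have hbdd : BddAbove {n | ∃ I, M.Indep I ∧ I ⊆ X ∧ I.ncard = n} := by
    refine ⟨M.E.ncard, fun n hn ↦ ?_⟩
    obtain ⟨K, hK, -, rfl⟩ := hn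
    exact Set.ncard_le_ncard hK.subset_ground M.ground_finite
  exact le_csSup hbdd hmem

lemma rk_le_of_forall {M : Matroid α} {X : Set α} {m : ℕ}
    (h : ∀ J, M.Indep J → J ⊆ X → J.ncard ≤ m) : M.rk X ≤ m :=
  csSup_le ⟨0, ∅, M.empty_indep, Set.empty_subset _, by simp⟩
    (fun n hn ↦ by obtain ⟨J, hJ, hJX, rfl⟩ := hn; exact h J hJ hJX)

lemma flat_closure' (M : Matroid α) (X : Set α) : M.IsFlat (M.closure X) := by
  refine ⟨fun I Y hIF hIY ↦ ?_, M.closure_subset_ground X⟩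
  have h1 : M.closure I = M.closure X := by
    rw [hIF.closure_eq_closure, M.closure_closure]
  exact hIY.subset_closure.trans (by rw [h1])

/-- The closure of a circuit is a cyclic flat. -/
lemma IsCircuit'.cyclicFlat_closure {M : Matroid α} [M.Finite] {C : Set α}
    (hC : M.IsCircuit' C) : M.CyclicFlat (M.closure C) := by
  refine ⟨M.flat_closure' C, fun e he ↦ ?_⟩
  by_cases heC : e ∈ C
  · exact ⟨C, hC, M.subset_closure C hC.1.subset_ground, heC⟩
  -- e ∈ cl C \ C : find a fundamental circuit
  obtain ⟨a, ha⟩ := hC.1.nonempty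
  have hKi : M.Indep (C \ {a}) := hC.2 _ (Set.sdiff_singleton_ssubset.2 ha)
  have hcl : M.closure (C \ {a}) = M.closure C := by
    refine subset_antisymm (M.closure_subset_closure Set.diff_subset) ?_
    rw [← M.closure_closure (C \ {a})]
    refine M.closure_subset_closure fun x hx ↦ ?_
    rcases eq_or_ne x a with rfl | hxa
    · have : M.Dep (insert x (C \ {x})) := by
        rw [Set.insert_diff_singleton, Set.insert_eq_of_mem ha]; exact hC.1
      exact (hKi.insert_dep_iff.1 this).1
    · exact M.subset_closure _ hKi.subset_ground ⟨hx, hxa⟩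
  have heK : e ∈ M.closure (C \ {a}) \ (C \ {a}) := by
    rw [hcl]; exact ⟨he, fun h ↦ heC h.1⟩
  have hdep : M.Dep (insert e (C \ {a})) := hKi.insert_dep_iff.2 heK
  obtain ⟨C', hC'sub, hC'⟩ := hdep.exists_isCircuit'_subset
    (((M.ground_finite.subset hC.1.subset_ground).diff (t := {a})).insert e)
  refine ⟨C', hC', ?_, ?_⟩
  · refine hC'sub.trans (Set.insert_subset he ?_)
    exact (Set.diff_subset.trans (M.subset_closure C hC.1.subset_ground))
  · by_contra heC'
    have hsub : C' ⊆ C \ {a} := fun x hx ↦ ((hC'sub hx).resolve_left (fun h ↦ heC' (h ▸ hx)))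
    exact hC'.1.not_indep (hKi.subset hsub)

end Matroid

/-- A set `I ⊆ E(M)` is independent in a finite matroid `M` iff `|I ∩ X| ≤ r X` for every
cyclic flat `X` of `M`. -/
theorem indep_iff_forall_cyclicFlat {α : Type*} (M : Matroid α) [M.Finite]
    (I : Set α) (hI : I ⊆ M.E) :
    M.Indep I ↔ ∀ X : Set α, M.CyclicFlat X → (I ∩ X).ncard ≤ M.rk X := by
  constructor
  · intro hIndep X _
    exact Matroid.indep_ncard_le_rk (hIndep.subset Set.inter_subset_left)
      Set.inter_subset_right
  · intro h
    by_contra hIndep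
    have hIdep : M.Dep I := ⟨hIndep, hI⟩
    obtain ⟨C, hCI, hC⟩ := hIdep.exists_isCircuit'_subset (M.ground_finite.subset hI)
    have hCfin : C.Finite := M.ground_finite.subset hC.1.subset_ground
    obtain ⟨a, ha⟩ := hC.1.nonempty
    have hKi : M.Indep (C \ {a}) := hC.2 _ (Set.sdiff_singleton_ssubset.2 ha)
    have hcl : M.closure (C \ {a}) = M.closure C := by
      refine subset_antisymm (M.closure_subset_closure Set.diff_subset) ?_
      rw [← M.closure_closure (C \ {a})]
      refine M.closure_subset_closure fun x hx ↦ ?_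
      rcases eq_or_ne x a with rfl | hxa
      · have : M.Dep (insert x (C \ {x})) := by
          rw [Set.insert_diff_singleton, Set.insert_eq_of_mem ha]
          exact hC.1
        exact (hKi.insert_dep_iff.1 this).1
      · exact M.subset_closure _ hKi.subset_ground ⟨hx, hxa⟩
    have hXcf := hC.cyclicFlat_closure
    have hle := h _ hXcf
    -- rk (closure C) ≤ ncard (C \ {a})
    have hrk : M.rk (M.closure C) ≤ (C \ {a}).ncard := by
      refine Matroid.rk_le_of_forall fun J hJ hJX ↦ ?_
      rw [← hcl] at hJX
      obtain ⟨J', hJ', hJJ'⟩ := hJ.subset_isBasis_of_subset hJX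
        (M.closure_subset_ground _)
      have hKb : M.IsBasis (C \ {a}) (M.closure (C \ {a})) := hKi.isBasis_closure
      have hcard : J'.encard = (C \ {a}).encard := hJ'.encard_eq_encard hKb
      have : J.encard ≤ (C \ {a}).encard := hcard ▸ Set.encard_le_encard hJJ'
      have hKfin : (C \ {a}).Finite := hCfin.diff (t := {a})
      rw [Set.ncard_def, Set.ncard_def]
      exact ENat.toNat_le_toNat this hKfin.encard_lt_top.ne
    have hCsub : C ⊆ I ∩ M.closure C :=
      Set.subset_inter hCI (M.subset_closure C hC.1.subset_ground)
    have hge : C.ncard ≤ (I ∩ M.closure C).ncard :=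
      Set.ncard_le_ncard hCsub ((M.ground_finite.subset hI).inter_of_left _)
    have hlt : (C \ {a}).ncard < C.ncard :=
      Set.ncard_lt_ncard (Set.sdiff_singleton_ssubset.2 ha) hCfin
    omega
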